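/- Let 0 ≤ ρ < 1 and let n, m ≥ 1 be integers. Then (1/2π) ∫_0^{2π} e^{imθ} · conj(((e^{iθ} - ρ)/(ρe^{iθ} - 1))^n) dθ = Σ_{k = max(n-m, 0)}^{n} (-1)^{n-k} · C(k + m - 1, k + m - n) · C(n, k) · ρ^{2k + m - n}. -/

import Mathlib

open Real Complex Finset

lemma integral_exp_int (ℓ : ℤ) :
    ∫ θ in (0:ℝ)..(2*π), Complex.exp (Complex.I * ℓ * θ) =
      if ℓ = 0 then (2*π : ℂ) else 0 := by
  rcases eq_or_ne ℓ 0 with h | h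
  · simp [h, two_pi_pos.le]
  · rw [if_neg h]
    have hc : (Complex.I * ℓ : ℂ) ≠ 0 := by
      simp [Complex.I_ne_zero, Complex.ext_iff] at *
      exact_mod_cast h
    rw [integral_exp_mul_complex hc]
    have h1 : Complex.exp (Complex.I * ℓ * (2*π)) = 1 := by
      rw [show (Complex.I * ℓ * (2*π) : ℂ) = ℓ * (2*π*Complex.I) by ring]
      exact Complex.exp_int_mul_two_pi_mul_I ℓ
    simp [h1]

lemma integral_exp_div_one_sub (ρ : ℝ) (hρ0 : 0 ≤ ρ) (hρ1 : ρ < 1) (n : ℕ)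
    (hn : 1 ≤ n) (a : ℤ) :
    ∫ θ in (0:ℝ)..(2*π), Complex.exp (Complex.I * a * θ) /
        (1 - ρ * Complex.exp (-(Complex.I * θ))) ^ n =
      if 0 ≤ a then
        (2*π : ℂ) * (((a.toNat + (n-1)).choose (n-1) : ℕ) : ℂ) * (ρ:ℂ) ^ a.toNat
      else 0 := by
  set F : ℕ → ℝ → ℂ := fun j θ =>
    (((j + (n-1)).choose (n-1) : ℕ) : ℂ) * (ρ:ℂ)^j * Complex.exp (Complex.I * (a - j) * θ)
    with hF
  have hr : ∀ θ : ℝ, ‖(ρ:ℂ) * Complex.exp (-(Complex.I * θ))‖ < 1 := by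
    intro θ
    have : ((-(Complex.I * θ) : ℂ)).re = 0 := by simp
    rw [norm_mul, Complex.norm_exp, this]
    simpa [Complex.norm_real, _root_.abs_of_nonneg hρ0] using hρ1
  have hs : ∀ θ : ℝ, HasSum (fun j => F j θ)
      (Complex.exp (Complex.I * a * θ) / (1 - ρ * Complex.exp (-(Complex.I * θ))) ^ n) := by
    intro θ
    have h := (hasSum_choose_mul_geometric_of_norm_lt_one (n-1) (hr θ)).mul_left
      (Complex.exp (Complex.I * a * θ))
    have hn' : (n - 1) + 1 = n := Nat.succ_pred_eq_of_pos hn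
    rw [hn'] at h
    convert h using 1
    · rfl
    · funext j
      rw [hF]
      simp only [mul_pow, ← Complex.exp_nat_mul]
      rw [show Complex.I * ((a:ℂ) - (j:ℕ)) * θ =
        Complex.I * a * θ + (j : ℕ) * -(Complex.I * θ) by ring, Complex.exp_add]
      ring
    · rw [mul_one_div]
  have hle : (0:ℝ) ≤ 2*π := two_pi_pos.le
  rw [intervalIntegral.integral_of_le hle]
  have hint : ∀ j, MeasureTheory.Integrable (F j)
      (MeasureTheory.volume.restrict (Set.Ioc (0:ℝ) (2*π))) := by
    intro j
    apply Continuous.integrableOn_Ioc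
    fun_prop
  have hnorm : ∀ j θ, ‖F j θ‖ =
      (((j + (n-1)).choose (n-1) : ℕ) : ℝ) * ρ^j := by
    intro j θ
    have : ((Complex.I * (a - j) * θ : ℂ)).re = 0 := by simp
    rw [hF]
    simp only [norm_mul, norm_pow, Complex.norm_exp, this,
      Real.exp_zero, mul_one, Complex.norm_natCast, Complex.norm_real, Real.norm_eq_abs,
      _root_.abs_of_nonneg hρ0]
  have hρ' : ‖ρ‖ < 1 := by rwa [Real.norm_eq_abs, _root_.abs_of_nonneg hρ0]
  have hsum : Summable fun j => ∫ θ in Set.Ioc (0:ℝ) (2*π), ‖F j θ‖ := by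
    have : (fun j => ∫ θ in Set.Ioc (0:ℝ) (2*π), ‖F j θ‖) =
        fun j => ((((j + (n-1)).choose (n-1) : ℕ) : ℝ) * ρ^j) * (2*π) := by
      funext j
      simp only [hnorm]
      rw [MeasureTheory.setIntegral_const, Real.volume_real_Ioc, smul_eq_mul]
      rw [max_eq_left (by linarith)]
      ring
    rw [this]
    exact (summable_choose_mul_geometric_of_norm_lt_one (n-1) hρ').mul_right _
  have hptw : ∀ θ : ℝ, Complex.exp (Complex.I * a * θ) /
      (1 - ρ * Complex.exp (-(Complex.I * θ))) ^ n = ∑' j, F j θ :=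
    fun θ => ((hs θ).tsum_eq).symm
  simp only [hptw]
  rw [← MeasureTheory.integral_tsum_of_summable_integral_norm hint hsum]
  · have hterm : ∀ j : ℕ, (∫ θ in Set.Ioc (0:ℝ) (2*π), F j θ) =
        (((j + (n-1)).choose (n-1) : ℕ) : ℂ) * (ρ:ℂ)^j *
          (if a - (j:ℤ) = 0 then (2*π : ℂ) else 0) := by
      intro j
      rw [← intervalIntegral.integral_of_le hle]
      rw [hF]
      simp only
      rw [intervalIntegral.integral_const_mul]
      congr 1
      rw [show ((a:ℂ) - (j:ℕ)) = ((a - (j:ℤ) : ℤ) : ℂ) by push_cast; ring]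
      exact integral_exp_int (a - j)
    simp only [hterm]
    rcases le_or_gt 0 a with ha | ha
    · rw [if_pos ha]
      rw [tsum_eq_single a.toNat]
      · rw [if_pos (by omega)]
        ring
      · intro j hj
        rw [if_neg (by omega), mul_zero]
    · rw [if_neg (not_le.mpr ha)]
      have : ∀ j : ℕ, (((j + (n-1)).choose (n-1) : ℕ) : ℂ) * (ρ:ℂ)^j *
          (if a - (j:ℤ) = 0 then (2*π : ℂ) else 0) = 0 := by
        intro j
        rw [if_neg (by omega), mul_zero]
      simp only [this, tsum_zero]

theorem mobius_fourier_matrix_entry (ρ : ℝ) (hρ0 : 0 ≤ ρ) (hρ1 : ρ < 1)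
    (n m : ℕ) (hn : 1 ≤ n) (hm : 1 ≤ m) :
    (1 / (2 * (π : ℂ))) * ∫ θ in (0 : ℝ)..(2 * π),
        Complex.exp (Complex.I * m * θ) *
          (starRingEnd ℂ)
            (((Complex.exp (Complex.I * θ) - ρ) /
                (ρ * Complex.exp (Complex.I * θ) - 1)) ^ n) =
      ∑ k ∈ Finset.Icc (n - m) n,
        (-1 : ℂ) ^ (n - k) * ((k + m - 1).choose (k + m - n) : ℂ) * (n.choose k : ℂ) *
          (ρ : ℂ) ^ (2 * k + m - n) := by
  have hne : ∀ c : ℂ, c.re = 0 → (ρ:ℂ) * Complex.exp c ≠ 1 := by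
    intro c hc h1
    have h2 : ‖(ρ:ℂ) * Complex.exp c‖ = ρ := by
      rw [norm_mul, Complex.norm_exp, hc]
      simp [Complex.norm_real, _root_.abs_of_nonneg hρ0]
    rw [h1] at h2
    simp at h2
    linarith
  have hρC : ∀ θ : ℝ, (1 : ℂ) - ρ * Complex.exp (-(Complex.I * θ)) ≠ 0 := by
    intro θ
    refine sub_ne_zero.mpr (Ne.symm (hne _ ?_))
    simp
  have key : ∀ θ : ℝ,
      Complex.exp (Complex.I * m * θ) *
          (starRingEnd ℂ)
            (((Complex.exp (Complex.I * θ) - ρ) /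
                (ρ * Complex.exp (Complex.I * θ) - 1)) ^ n) =
      ∑ k ∈ Finset.range (n+1),
        ((n.choose k : ℂ) * (-(ρ:ℂ))^k * (-1:ℂ)^n) *
          (Complex.exp (Complex.I * (((k : ℤ) + m - n : ℤ) : ℂ) * θ) /
            (1 - ρ * Complex.exp (-(Complex.I * θ))) ^ n) := by
    intro θ
    set z := Complex.exp (Complex.I * θ) with hz
    set w := Complex.exp (-(Complex.I * θ)) with hw
    have hzw : z * w = 1 := by rw [hz, hw, ← Complex.exp_add]; simp
    have hconjz : (starRingEnd ℂ) z = w := by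
      rw [hz, hw, ← Complex.exp_conj]
      congr 1
      simp [Complex.conj_I]
    have hw0 : (1:ℂ) - ρ * w ≠ 0 := hρC θ
    have e1 : w - (ρ:ℂ) = (1 - ρ*z) * w := by linear_combination (ρ:ℂ) * hzw
    have e2 : (ρ:ℂ)*w - 1 = -(1 - ρ*w) := by ring
    rw [map_pow, map_div₀, map_sub, map_sub, map_mul, map_one, hconjz,
      Complex.conj_ofReal, e1, e2, div_neg, neg_pow, div_pow, mul_pow]
    have hbin : ((1:ℂ) - ρ*z)^n =
        ∑ k ∈ Finset.range (n+1), (-(ρ:ℂ)*z)^k * (n.choose k : ℂ) := by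
      rw [show (1:ℂ) - ρ*z = -(ρ:ℂ)*z + 1 by ring, add_pow]
      simp
    rw [hbin, Finset.sum_mul, Finset.sum_div, Finset.mul_sum, Finset.mul_sum]
    refine Finset.sum_congr rfl fun k hk => ?_
    have hE : Complex.exp (Complex.I * (((k : ℤ) + m - n : ℤ) : ℂ) * θ) =
        z^k * Complex.exp (Complex.I * m * θ) * w^n := by
      rw [hz, hw, ← Complex.exp_nat_mul, ← Complex.exp_nat_mul, ← Complex.exp_add,
        ← Complex.exp_add]
      congr 1
      push_cast
      ring
    rw [hE, mul_pow, div_eq_mul_inv, div_eq_mul_inv]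
    ring
  simp only [key]
  have hcont : ∀ b : ℂ, Continuous fun θ : ℝ =>
      Complex.exp (Complex.I * b * θ) / (1 - ρ * Complex.exp (-(Complex.I * θ)))^n := by
    intro b
    apply Continuous.div
    · fun_prop
    · fun_prop
    · intro θ; exact pow_ne_zero _ (hρC θ)
  rw [intervalIntegral.integral_finset_sum (fun k _ =>
    (Continuous.intervalIntegrable (u := fun θ : ℝ => ((n.choose k : ℂ) * (-(ρ:ℂ))^k * (-1:ℂ)^n) *
      (Complex.exp (Complex.I * (((k : ℤ) + m - n : ℤ) : ℂ) * θ) /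
        (1 - ρ * Complex.exp (-(Complex.I * θ))) ^ n)) (continuous_const.mul (hcont _)) _ _))]
  simp only [intervalIntegral.integral_const_mul, integral_exp_div_one_sub ρ hρ0 hρ1 n hn]
  rw [Finset.mul_sum]
  have hsub : Finset.Icc (n - m) n ⊆ Finset.range (n+1) := by
    intro k hk
    simp only [Finset.mem_Icc] at hk
    simp only [Finset.mem_range]
    omega
  rw [← Finset.sum_subset hsub (fun k hk hk2 => ?_)]
  · refine Finset.sum_congr rfl fun k hk => ?_
    simp only [Finset.mem_Icc] at hk
    rw [if_pos (by omega)]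
    have ht : ((k:ℤ) + m - n).toNat = k + m - n := by omega
    rw [ht, show (k + m - n) + (n-1) = k + m - 1 by omega]
    have hch : (k + m - 1).choose (k + m - n) = (k + m - 1).choose (n-1) := by
      rw [show k + m - n = (k + m - 1) - (n - 1) by omega]
      exact Nat.choose_symm (by omega)
    rw [hch, show 2*k + m - n = k + (k + m - n) by omega, pow_add]
    have hsign : ((-1:ℂ))^(n-k) = (-1:ℂ)^n * (-1:ℂ)^k := by
      rw [← pow_add, show n + k = (n-k) + 2*k by omega, pow_add, pow_mul]
      norm_num
    rw [hsign, neg_pow]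
    have h2π : (π:ℂ) ≠ 0 := Complex.ofReal_ne_zero.mpr Real.pi_ne_zero
    field_simp
  · simp only [Finset.mem_range] at hk
    simp only [Finset.mem_Icc, not_and, not_le] at hk2
    rw [if_neg (by omega)]
    ring
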